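/- Let p be a proximal point of h at x with parameter μ, i.e., p minimizes z ↦ h(z) + ‖z − x‖²/(2μ) over E. Then the Moreau envelope M_h^μ is differentiable at x with gradient ∇M_h^μ(x) = (x − p)/μ. -/
import Mathlib


open scoped NNReal RealInnerProductSpace

/-- If `p` is a proximal point of `h` at `x` with parameter `μ`, then the Moreau
envelope `M_h^μ` is differentiable at `x` with gradient `(x - p) / μ`. -/
theorem moreau_envelope_hasGradientAt
    {E : Type*} [NormedAddCommGroup E] [InnerProductSpace ℝ E] [FiniteDimensional ℝ E]
    (h : E → ℝ) (ℓh : ℝ≥0) (hconv : ConvexOn ℝ Set.univ h) (hlip : LipschitzWith ℓh h)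
    (μ : ℝ) (hμ : 0 < μ) (x p : E)
    (hp : ∀ z : E, h p + ‖p - x‖ ^ 2 / (2 * μ) ≤ h z + ‖z - x‖ ^ 2 / (2 * μ)) :
    HasGradientAt (fun y : E => ⨅ z : E, (h z + ‖z - y‖ ^ 2 / (2 * μ)))
      (μ⁻¹ • (x - p)) x := by
  set f : E → E → ℝ := fun y z => h z + ‖z - y‖ ^ 2 / (2 * μ) with hf
  set M : E → ℝ := fun y => ⨅ z : E, f y z with hM
  set g : E := μ⁻¹ • (x - p) with hg
  -- boundedness below
  have hbdd : ∀ y : E, BddBelow (Set.range (f y)) := by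
    intro y
    refine ⟨h y - μ * (ℓh : ℝ) ^ 2 / 2, ?_⟩
    rintro _ ⟨z, rfl⟩
    have h1 : h y - h z ≤ (ℓh : ℝ) * ‖z - y‖ := by
      have := hlip.dist_le_mul y z
      rw [Real.dist_eq, dist_eq_norm] at this
      have hz : ‖y - z‖ = ‖z - y‖ := norm_sub_rev _ _
      calc h y - h z ≤ |h y - h z| := le_abs_self _
        _ ≤ (ℓh : ℝ) * ‖z - y‖ := by rw [← hz]; exact this
    have h2 : (‖z - y‖ - μ * (ℓh : ℝ)) ^ 2 ≥ 0 := sq_nonneg _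
    simp only [hf]
    have h3 : (ℓh:ℝ) * ‖z - y‖ - μ * (ℓh:ℝ) ^ 2 / 2 ≤ ‖z - y‖ ^ 2 / (2 * μ) := by
      rw [le_div_iff₀ (by positivity : (0:ℝ) < 2 * μ)]
      nlinarith [sq_nonneg (‖z - y‖ - μ * (ℓh:ℝ))]
    linarith
  -- value at x
  have hMx : M x = f x p := le_antisymm (ciInf_le (hbdd x) p) (le_ciInf hp)
  -- upper quadratic bound
  have hupper : ∀ y : E, M y ≤ M x + ⟪g, y - x⟫ + ‖y - x‖ ^ 2 / (2 * μ) := by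
    intro y
    have h1 : M y ≤ f y p := ciInf_le (hbdd y) p
    have h2 : ‖p - y‖ ^ 2 = ‖p - x‖ ^ 2 + 2 * ⟪p - x, x - y⟫ + ‖x - y‖ ^ 2 := by
      have : p - y = (p - x) + (x - y) := by abel
      rw [this, norm_add_sq_real]
    have h3 : ⟪g, y - x⟫ = μ⁻¹ * ⟪p - x, x - y⟫ := by
      rw [hg, real_inner_smul_left]
      congr 1
      rw [show x - p = -(p-x) by abel, show y - x = -(x-y) by abel, inner_neg_neg]
    have h4 : ‖x - y‖ = ‖y - x‖ := norm_sub_rev _ _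
    rw [hMx]
    simp only [hf] at h1 ⊢
    rw [h2, h4] at h1
    rw [h3]
    have hμ' : (0:ℝ) < 2 * μ := by positivity
    calc M y ≤ h p + (‖p - x‖ ^ 2 + 2 * ⟪p - x, x - y⟫ + ‖y - x‖ ^ 2) / (2 * μ) := h1
      _ = h p + ‖p - x‖ ^ 2 / (2 * μ) + μ⁻¹ * ⟪p - x, x - y⟫ + ‖y - x‖ ^ 2 / (2 * μ) := by
          field_simp; ring
  -- midpoint convexity
  have hmid : ∀ y : E, 2 * M x ≤ M y + M (x + (x - y)) := by
    intro y
    set y' : E := x + (x - y) with hy'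
    have key : ∀ z z' : E, 2 * M x ≤ f y z + f y' z' := by
      intro z z'
      set m : E := (2:ℝ)⁻¹ • (z + z') with hm
      have hMxm : M x ≤ f x m := ciInf_le (hbdd x) m
      have hconvm : h m ≤ (2:ℝ)⁻¹ * h z + (2:ℝ)⁻¹ * h z' := by
        have := hconv.2 (Set.mem_univ z) (Set.mem_univ z')
          (by norm_num : (0:ℝ) ≤ (2:ℝ)⁻¹) (by norm_num : (0:ℝ) ≤ (2:ℝ)⁻¹) (by norm_num)
        rw [hm, smul_add]
        exact this
      have hnorm : ‖m - x‖ ^ 2 * 2 ≤ ‖z - y‖ ^ 2 + ‖z' - y'‖ ^ 2 := by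
        have hmx : m - x = (2:ℝ)⁻¹ • ((z - y) + (z' - y')) := by
          rw [hm, hy']; rw [smul_add, smul_add]; module
        rw [hmx, norm_smul]
        have := norm_add_sq_real (z - y) (z' - y')
        have hc := real_inner_le_norm (z - y) (z' - y')
        simp only [Real.norm_eq_abs]
        rw [mul_pow, abs_of_pos (by norm_num : (0:ℝ) < (2:ℝ)⁻¹)]
        nlinarith [sq_nonneg (‖z - y‖ - ‖z' - y'‖)]
      have hμ' : (0:ℝ) < 2 * μ := by positivity
      have : 2 * f x m ≤ f y z + f y' z' := by
        simp only [hf]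
        have h5 : 2 * (‖m - x‖ ^ 2 / (2 * μ)) ≤ (‖z - y‖ ^ 2 + ‖z' - y'‖ ^ 2) / (2 * μ) := by
          rw [mul_div_assoc']
          gcongr
          linarith
        have h6 : 2 * h m ≤ h z + h z' := by linarith
        calc 2 * (h m + ‖m - x‖ ^ 2 / (2 * μ))
            = 2 * h m + 2 * (‖m - x‖ ^ 2 / (2 * μ)) := by ring
          _ ≤ (h z + h z') + ((‖z - y‖ ^ 2 + ‖z' - y'‖ ^ 2) / (2 * μ)) := by linarith
          _ = h z + ‖z - y‖ ^ 2 / (2 * μ) + (h z' + ‖z' - y'‖ ^ 2 / (2 * μ)) := by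
              field_simp; ring
      linarith
    have step1 : ∀ z : E, 2 * M x - f y z ≤ M y' :=
      fun z => le_ciInf (fun z' => by linarith [key z z'])
    have step2 : 2 * M x - M y' ≤ M y :=
      le_ciInf (fun z => by linarith [step1 z])
    linarith
  -- lower bound
  have hlower : ∀ y : E, M x + ⟪g, y - x⟫ - ‖y - x‖ ^ 2 / (2 * μ) ≤ M y := by
    intro y
    have h1 := hmid y
    have h2 := hupper (x + (x - y))
    have h3 : (x + (x - y)) - x = -(y - x) := by abel
    rw [h3, inner_neg_right, norm_neg] at h2
    linarith
  -- assemble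
  rw [hasGradientAt_iff_hasFDerivAt, hasFDerivAt_iff_isLittleO_nhds_zero]
  have hbound : ∀ v : E, ‖M (x + v) - M x - ⟪g, v⟫‖ ≤ (2 * μ)⁻¹ * ‖v‖ ^ 2 := by
    intro v
    have hxv : (x + v) - x = v := by abel
    have h1 := hupper (x + v)
    have h2 := hlower (x + v)
    rw [hxv] at h1 h2
    rw [Real.norm_eq_abs, abs_le]
    rw [div_eq_inv_mul] at h1 h2
    constructor <;> linarith
  have hO : (fun v : E => M (x + v) - M x - ⟪g, v⟫) =O[nhds 0] (fun v : E => ‖v‖ ^ 2) :=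
    Asymptotics.IsBigO.of_bound ((2 * μ)⁻¹) (Filter.Eventually.of_forall (fun v => by
      simpa [abs_of_nonneg (sq_nonneg ‖v‖)] using hbound v))
  have hgoal := hO.trans_isLittleO (Asymptotics.isLittleO_norm_pow_id (by norm_num : 1 < 2))
  simp only [InnerProductSpace.toDual_apply_apply]
  exact hgoal
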